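/- Let I be a nonempty finite index set, and let B > 0, A ≥ 0, and a_i > 0, c_i > 0 for each i ∈ I. Then the function b ↦ A + Σ_{i∈I} a_i / (b·B·log₂(1 + c_i/b)) is strictly decreasing on (0, ∞). -/

import Mathlib

open Real Set

private lemma SL_hasDerivAt (c : ℝ) {b : ℝ} (hb : 0 < b) (hc : 0 < c) :
    HasDerivAt (fun b : ℝ => b * Real.log (1 + c / b))
      (Real.log (1 + c / b) - c / (b + c)) b := by
  have hpos : 0 < 1 + c / b := by positivity
  have h1 : HasDerivAt (fun b : ℝ => 1 + c / b) (c * -(b ^ 2)⁻¹) b := by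
    simpa [div_eq_mul_inv] using
      (((hasDerivAt_inv hb.ne').const_mul c).const_add (1 : ℝ))
  have hlog : HasDerivAt (fun b : ℝ => Real.log (1 + c / b))
      ((c * -(b ^ 2)⁻¹) / (1 + c / b)) b := h1.log hpos.ne'
  have : HasDerivAt (fun b : ℝ => b * Real.log (1 + c / b))
      (1 * Real.log (1 + c / b) + b * ((c * -(b ^ 2)⁻¹) / (1 + c / b))) b :=
    (hasDerivAt_id b).mul hlog
  convert this using 1
  have hbc : b + c ≠ 0 := by positivity
  field_simp
  ring

private lemma SL_mono (c : ℝ) (hc : 0 < c) :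
    StrictMonoOn (fun b : ℝ => b * Real.log (1 + c / b)) (Set.Ioi 0) := by
  apply strictMonoOn_of_deriv_pos (convex_Ioi 0)
  · intro x hx
    exact ((SL_hasDerivAt c hx hc).continuousAt).continuousWithinAt
  · intro x hx
    rw [interior_Ioi] at hx
    replace hx : 0 < x := hx
    rw [(SL_hasDerivAt c hx hc).deriv]
    have hxc : 0 < x + c := by positivity
    have hy : (1 : ℝ) < 1 + c / x := by
      have : 0 < c / x := div_pos hc hx
      linarith
    have hyinv : (1 + c / x)⁻¹ ≠ 1 := by
      intro h
      have := inv_eq_one.mp h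
      linarith
    have hlt := Real.log_lt_sub_one_of_pos (inv_pos.mpr (by linarith : (0:ℝ) < 1 + c / x)) hyinv
    rw [Real.log_inv] at hlt
    -- hlt : -log (1 + c/x) < (1 + c/x)⁻¹ - 1
    have hval : (1 + c / x)⁻¹ = x / (x + c) := by
      rw [eq_div_iff hxc.ne', inv_mul_eq_div, div_eq_iff (by positivity : (0:ℝ) < 1 + c / x).ne']
      field_simp
    rw [hval] at hlt
    have : c / (x + c) < Real.log (1 + c / x) := by
      have hx1 : x / (x + c) - 1 = -(c / (x + c)) := by
        field_simp
        ring
      rw [hx1] at hlt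
      linarith
    linarith

theorem SL_delay_strictAnti
    {ι : Type*} [Fintype ι] [Nonempty ι]
    (B A : ℝ) (hB : 0 < B) (hA : 0 ≤ A)
    (a c : ι → ℝ) (ha : ∀ i, 0 < a i) (hc : ∀ i, 0 < c i) :
    StrictAntiOn
      (fun b : ℝ => A + ∑ i, a i / (b * B * Real.logb 2 (1 + c i / b)))
      (Set.Ioi 0) := by
  intro x hx y hy hxy
  simp only [Set.mem_Ioi] at hx hy
  have hlog2 : (0:ℝ) < Real.log 2 := Real.log_pos one_lt_two
  apply add_lt_add_right
  apply Finset.sum_lt_sum_of_nonempty Finset.univ_nonempty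
  intro i _
  have harg : ∀ {t : ℝ}, 0 < t → 1 < 1 + c i / t := by
    intro t ht
    have : 0 < c i / t := div_pos (hc i) ht
    linarith
  have hD : ∀ {t : ℝ}, 0 < t → 0 < t * B * Real.logb 2 (1 + c i / t) := by
    intro t ht
    have : 0 < Real.logb 2 (1 + c i / t) := Real.logb_pos one_lt_two (harg ht)
    positivity
  have hmono := SL_mono (c i) (hc i) hx hy hxy
  have hkey : x * B * Real.logb 2 (1 + c i / x) < y * B * Real.logb 2 (1 + c i / y) := by
    simp only [Real.logb, Real.log_div] at *
    have h := (mul_lt_mul_iff_of_pos_right (div_pos hB hlog2)).mpr hmono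
    calc x * B * (Real.log (1 + c i / x) / Real.log 2)
        = x * Real.log (1 + c i / x) * (B / Real.log 2) := by ring
      _ < y * Real.log (1 + c i / y) * (B / Real.log 2) := h
      _ = y * B * (Real.log (1 + c i / y) / Real.log 2) := by ring
  exact div_lt_div_of_pos_left (ha i) (hD hx) hkey
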